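/- Let a₁,…,a_n be distinct reals, ε₁,…,ε_n ∈ {-1,1}, Δᵢ(a) = εᵢ(a-aᵢ), let I ⊆ ℝ be an open interval on which Δᵢ > 0 for all i, let F̂(a) = ∏_{i=1}^n (a-aᵢ), x(a) = ∑_{i=1}^n ξᵢ Δᵢ(a)^{-1/2} with ξᵢ ∈ ℝ, and b_k(a) = ∑_{s=1}^{k} F̂^{(k-s)}(a)/(k-s)! · x^{(s)}(a)/(1/2)_s. Then for every 1 ≤ k ≤ n, the function b̃_k(a) = ∑_{s=1}^{k} C(n-s, k-s) (-a)^{k-s} b_{n-s+1}(a) satisfies b̃_k(a) = (-1)^k ∑_{i=1}^n (ξᵢ / Δᵢ(a)^{1/2}) σ^i_{k-1} on I. -/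

import Mathlib

open Polynomial

/-- The Pochhammer symbol `(1/2)_s`. -/
noncomputable def poch (s : ℕ) : ℝ := (ascPochhammer ℝ s).eval (1/2 : ℝ)

/-- For a polynomial `Q` of degree `d` written as `Q(X) = ∑_{k=0}^{d} (-1)^k σ_k X^{d-k}`,
`sig d Q k` is the coefficient `σ_k`, extended by `0` outside `0 ≤ k ≤ d`. -/
noncomputable def sig (d : ℕ) (Q : Polynomial ℝ) (k : ℤ) : ℝ :=
  if 0 ≤ k ∧ k ≤ (d : ℤ) then (-1 : ℝ) ^ k * Q.coeff (d - k.toNat) else 0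

/-- `σ^i_k` for `P(X) = ∏_{j} (X-a_j)`: defined by
`P(X)/(X-aᵢ) = ∑_{k=0}^{n-1} (-1)^k σ^i_k X^{n-1-k}`, with `σ^i_{-1} = σ^i_n = 0`. -/
noncomputable def sigmaI (n : ℕ) (a : Fin n → ℝ) (i : Fin n) (k : ℤ) : ℝ :=
  sig (n - 1) (∏ j ∈ Finset.univ.erase i, (X - C (a j))) k

/-- The coefficient `b_k(a) = ∑_{s=1}^{k} F̂^{(k-s)}(a)/(k-s)! · x^{(s)}(a)/(1/2)_s` where
`F̂(a) = ∏ᵢ (a-aᵢ)` and `x(a) = ∑ᵢ ξᵢ (εᵢ(a-aᵢ))^{-1/2}`. -/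
noncomputable def bk (n : ℕ) (a ε ξ : Fin n → ℝ) (k : ℕ) (t : ℝ) : ℝ :=
  ∑ s ∈ Finset.Icc 1 k,
    iteratedDeriv (k - s) (fun u => ∏ i, (u - a i)) t / (Nat.factorial (k - s) : ℝ) *
      (iteratedDeriv s (fun u => ∑ i, ξ i * (ε i * (u - a i)) ^ (-(1/2) : ℝ)) t / poch s)


lemma poch_prod (s : ℕ) : poch s = ∏ j ∈ Finset.range s, ((1:ℝ)/2 + j) := by
  induction s with
  | zero => simp [poch]
  | succ s IH =>
    rw [Finset.prod_range_succ, ← IH, poch, poch, ascPochhammer_succ_right]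
    simp

lemma poch_pos (s : ℕ) : 0 < poch s := ascPochhammer_pos s _ (by norm_num)

lemma neg_prod (s : ℕ) :
    (∏ j ∈ Finset.range s, ((-(1/2) : ℝ) - j)) = (-1 : ℝ) ^ s * poch s := by
  rw [poch_prod]
  induction s with
  | zero => simp
  | succ s IH =>
    rw [Finset.prod_range_succ, Finset.prod_range_succ, IH, pow_succ]
    ring


lemma xder (n : ℕ) (a ε ξ : Fin n → ℝ) (s : ℕ) :
    ∀ t : ℝ, (∀ i, 0 < ε i * (t - a i)) →
      iteratedDeriv s (fun u => ∑ i, ξ i * (ε i * (u - a i)) ^ (-(1/2) : ℝ)) t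
        = ∑ i, ξ i * (∏ j ∈ Finset.range s, ((-(1/2) : ℝ) - j)) * ε i ^ s *
            (ε i * (t - a i)) ^ ((-(1/2) : ℝ) - s) := by
  induction s with
  | zero => intro t ht; simp
  | succ s IH =>
    intro t ht
    rw [iteratedDeriv_succ]
    have hU : IsOpen {u : ℝ | ∀ i, 0 < ε i * (u - a i)} := by
      have h : {u : ℝ | ∀ i, 0 < ε i * (u - a i)} = ⋂ i, {u : ℝ | 0 < ε i * (u - a i)} := by
        ext u; simp [Set.mem_iInter]
      rw [h]
      exact isOpen_iInter_of_finite fun i =>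
        isOpen_lt continuous_const (by fun_prop)
    have heq : iteratedDeriv s (fun u => ∑ i, ξ i * (ε i * (u - a i)) ^ (-(1/2) : ℝ))
        =ᶠ[nhds t] fun u => ∑ i, ξ i * (∏ j ∈ Finset.range s, ((-(1/2) : ℝ) - j)) * ε i ^ s *
            (ε i * (u - a i)) ^ ((-(1/2) : ℝ) - s) :=
      Filter.eventuallyEq_of_mem (hU.mem_nhds ht) fun u hu => IH u hu
    rw [heq.deriv_eq]
    have hD : HasDerivAt (fun u => ∑ i, ξ i * (∏ j ∈ Finset.range s, ((-(1/2):ℝ) - j)) * ε i ^ s *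
            (ε i * (u - a i)) ^ ((-(1/2) : ℝ) - s))
        (∑ i, (ξ i * (∏ j ∈ Finset.range s, ((-(1/2):ℝ) - j)) * ε i ^ s) *
            (ε i * 1 * (((-(1/2):ℝ)) - s) * (ε i * (t - a i)) ^ ((-(1/2):ℝ) - s - 1))) t := by
      apply HasDerivAt.fun_sum
      intro i _
      have h : HasDerivAt (fun u : ℝ => (ε i * (u - a i)) ^ ((-(1/2):ℝ) - s))
          (ε i * 1 * (((-(1/2):ℝ)) - s) * (ε i * (t - a i)) ^ ((-(1/2):ℝ) - s - 1)) t :=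
        (((hasDerivAt_id t).sub_const (a i)).const_mul (ε i)).rpow_const
          (Or.inl (ne_of_gt (ht i)))
      exact h.const_mul _
    rw [hD.deriv]
    refine Finset.sum_congr rfl fun i _ => ?_
    rw [Finset.prod_range_succ]
    push_cast
    rw [show ((-(1/2):ℝ) - ((s:ℝ)+1)) = (-(1/2) - s) - 1 by ring]
    ring


lemma iterDeriv_eval (m : ℕ) : ∀ (F : Polynomial ℝ),
    iteratedDeriv m (fun u => F.eval u) = fun t => (Polynomial.derivative^[m] F).eval t := by
  induction m with
  | zero => intro F; simp
  | succ m IH =>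
    intro F
    rw [iteratedDeriv_succ']
    have : deriv (fun u => F.eval u) = fun u => (Polynomial.derivative F).eval u :=
      funext fun u => Polynomial.deriv (p := F) (x := u)
    rw [this, IH, Function.iterate_succ_apply]

lemma hcoeff (F : Polynomial ℝ) (m : ℕ) (t : ℝ) :
    iteratedDeriv m (fun u => F.eval u) t / (Nat.factorial m : ℝ) = (taylor t F).coeff m := by
  rw [iterDeriv_eval, taylor_coeff]
  have h := congrFun (Polynomial.factorial_smul_hasseDeriv (R := ℝ) (k := m)) F
  rw [← h]
  rw [LinearMap.smul_apply]
  simp only [LinearMap.smul_apply, eval_smul, smul_eq_mul, nsmul_eq_mul, eval_mul, eval_natCast]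
  field_simp [Nat.factorial_ne_zero]



lemma coeff_rel (Q : Polynomial ℝ) (c t : ℝ) (j : ℕ) :
    (taylor t ((X - C c) * Q)).coeff (j + 1)
      = (taylor t Q).coeff j + (t - c) * (taylor t Q).coeff (j + 1) := by
  rw [taylor_mul]
  have h : taylor t (X - C c) = X + C (t - c) := by
    rw [map_sub, taylor_X, taylor_C, C_sub]; ring
  rw [h, add_mul, coeff_add, coeff_X_mul, coeff_C_mul]

lemma lemB (Q : Polynomial ℝ) (c t : ℝ) (hct : t - c ≠ 0) (m : ℕ) (hm : 1 ≤ m) :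
    ∑ r ∈ Finset.Icc 1 m, (-1 : ℝ) ^ r * ((t - c)⁻¹) ^ r *
        (taylor t ((X - C c) * Q)).coeff (m - r)
      = -(taylor t Q).coeff (m - 1) := by
  induction m, hm using Nat.le_induction with
  | base =>
    rw [Finset.Icc_self, Finset.sum_singleton]
    simp only [Nat.sub_self, pow_one, taylor_coeff_zero, eval_mul, eval_sub, eval_X, eval_C]
    field_simp
  | succ m hm IH =>
    have hsplit : Finset.range (m + 1) = insert 0 (Finset.Icc 1 m) := by
      ext x; simp; omega
    have hshift : ∑ r ∈ Finset.Icc 1 (m + 1), (-1 : ℝ) ^ r * ((t - c)⁻¹) ^ r *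
          (taylor t ((X - C c) * Q)).coeff (m + 1 - r)
        = ∑ r ∈ Finset.range (m + 1), (-1 : ℝ) ^ (1 + r) * ((t - c)⁻¹) ^ (1 + r) *
          (taylor t ((X - C c) * Q)).coeff (m + 1 - (1 + r)) := by
      rw [← Finset.Ico_add_one_right_eq_Icc, Finset.sum_Ico_eq_sum_range]
      simp
    rw [hshift, hsplit, Finset.sum_insert (by simp)]
    have hre : ∑ r ∈ Finset.Icc 1 m, (-1 : ℝ) ^ (1 + r) * ((t - c)⁻¹) ^ (1 + r) *
          (taylor t ((X - C c) * Q)).coeff (m + 1 - (1 + r))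
        = -(t - c)⁻¹ * ∑ r ∈ Finset.Icc 1 m, (-1 : ℝ) ^ r * ((t - c)⁻¹) ^ r *
          (taylor t ((X - C c) * Q)).coeff (m - r) := by
      rw [Finset.mul_sum]
      refine Finset.sum_congr rfl fun r hr => ?_
      have : m + 1 - (1 + r) = m - r := by omega
      rw [this, pow_add, pow_add]
      ring
    rw [hre, IH]
    have hm1 : m = (m - 1) + 1 := by omega
    have hcr : (taylor t ((X - C c) * Q)).coeff m
        = (taylor t Q).coeff (m - 1) + (t - c) * (taylor t Q).coeff m := by
      rw (occs := .pos [1, 3]) [hm1]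
      exact coeff_rel Q c t (m - 1)
    rw [Nat.add_sub_cancel, hcr]
    have hinv : (t - c)⁻¹ * (t - c) = 1 := inv_mul_cancel₀ hct
    field_simp
    linear_combination (-((taylor t Q).coeff (m - 1)) - (t - c) * (taylor t Q).coeff m) * hinv


lemma lemC (P : Polynomial ℝ) (n k : ℕ) (hk1 : 1 ≤ k) (hkn : k ≤ n)
    (hdeg : P.natDegree < n) (t : ℝ) :
    ∑ s ∈ Finset.Icc 1 k, (Nat.choose (n - s) (k - s) : ℝ) * (-t) ^ (k - s) *
        (taylor t P).coeff (n - s)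
      = P.coeff (n - k) := by
  have hP : P = taylor (-t) (taylor t P) := by
    rw [taylor_taylor, neg_add_cancel]
    simp [taylor_apply]
  set Q := taylor t P with hQ
  have hQdeg : (hasseDeriv (n - k) Q).natDegree < k := by
    have h1 := Polynomial.natDegree_hasseDeriv_le Q (n - k)
    have h2 : Q.natDegree = P.natDegree := natDegree_taylor P t
    omega
  have heval : P.coeff (n - k) = ∑ l ∈ Finset.range k,
      (Nat.choose (l + (n - k)) (n - k) : ℝ) * Q.coeff (l + (n - k)) * (-t) ^ l := by
    conv_lhs => rw [hP]
    rw [taylor_coeff, eval_eq_sum_range' hQdeg]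
    refine Finset.sum_congr rfl fun l _ => ?_
    rw [hasseDeriv_coeff]
  rw [heval]
  rw [← Finset.Ico_add_one_right_eq_Icc, Finset.sum_Ico_eq_sum_range, ← Finset.sum_range_reflect]
  have hkk : k + 1 - 1 = k := by omega
  rw [hkk]
  refine Finset.sum_congr rfl fun l hl => ?_
  simp only [Finset.mem_range] at hl
  have e1 : 1 + (k - 1 - l) = k - l := by omega
  rw [e1]
  have e2 : n - (k - l) = l + (n - k) := by omega
  have e3 : k - (k - l) = l := by omega
  rw [e2, e3]
  have e5 : (l + (n - k)).choose l = (l + (n - k)).choose (n - k) := by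
    rw [← Nat.choose_symm (by omega : l ≤ l + (n - k))]
    congr 1
    omega
  rw [e5]
  ring

lemma bk_eq (n : ℕ) (a ε ξ : Fin n → ℝ) (hε : ∀ i, ε i = 1 ∨ ε i = -1) (t : ℝ)
    (ht : ∀ i, 0 < ε i * (t - a i)) (m : ℕ) (hm : 1 ≤ m) :
    bk n a ε ξ m t = ∑ i, ξ i * (ε i * (t - a i)) ^ (-(1/2) : ℝ) *
      (-(taylor t (∏ j ∈ Finset.univ.erase i, (X - C (a j)))).coeff (m - 1)) := by
  have hεne : ∀ i, ε i ≠ 0 := fun i => by rcases hε i with h | h <;> rw [h] <;> norm_num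
  have htne : ∀ i, t - a i ≠ 0 := by
    intro i h
    have := ht i
    rw [h, mul_zero] at this
    exact lt_irrefl 0 this
  set F : Polynomial ℝ := ∏ i, (X - C (a i)) with hF
  have hfun : (fun u : ℝ => ∏ i, (u - a i)) = fun u => F.eval u := by
    funext u; simp [hF, eval_prod]
  unfold bk
  rw [hfun]
  have hstep : ∀ s ∈ Finset.Icc 1 m,
      iteratedDeriv (m - s) (fun u => F.eval u) t / (Nat.factorial (m - s) : ℝ) *
        (iteratedDeriv s (fun u => ∑ i, ξ i * (ε i * (u - a i)) ^ (-(1/2) : ℝ)) t / poch s)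
      = ∑ i, (taylor t F).coeff (m - s) *
          (ξ i * (ε i * (t - a i)) ^ (-(1/2) : ℝ) * ((-1 : ℝ) ^ s * ((t - a i)⁻¹) ^ s)) := by
    intro s _
    rw [hcoeff, xder n a ε ξ s t ht, Finset.sum_div, Finset.mul_sum]
    refine Finset.sum_congr rfl fun i _ => ?_
    rw [neg_prod]
    have hd : (ε i * (t - a i)) ^ ((-(1/2) : ℝ) - s)
        = (ε i * (t - a i)) ^ (-(1/2) : ℝ) * ((ε i * (t - a i)) ^ (s : ℕ))⁻¹ := by
      rw [Real.rpow_sub (ht i), Real.rpow_natCast, div_eq_mul_inv]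
    rw [hd, mul_pow]
    have h2 : (ε i ^ s * (t - a i) ^ s)⁻¹ = (ε i ^ s)⁻¹ * ((t - a i)⁻¹) ^ s := by
      rw [mul_inv, inv_pow]
    rw [h2]
    have hkey : ξ i * ((-1 : ℝ) ^ s * poch s) * ε i ^ s *
          ((ε i * (t - a i)) ^ (-(1/2) : ℝ) * ((ε i ^ s)⁻¹ * ((t - a i)⁻¹) ^ s)) / poch s
        = ξ i * (ε i * (t - a i)) ^ (-(1/2) : ℝ) * ((-1 : ℝ) ^ s * ((t - a i)⁻¹) ^ s) := by
      rw [div_eq_mul_inv]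
      calc ξ i * ((-1 : ℝ) ^ s * poch s) * ε i ^ s *
            ((ε i * (t - a i)) ^ (-(1/2) : ℝ) * ((ε i ^ s)⁻¹ * ((t - a i)⁻¹) ^ s)) * (poch s)⁻¹
          = (ξ i * (ε i * (t - a i)) ^ (-(1/2) : ℝ) * ((-1 : ℝ) ^ s * ((t - a i)⁻¹) ^ s)) *
              ((poch s * (poch s)⁻¹) * (ε i ^ s * (ε i ^ s)⁻¹)) := by ring
        _ = _ := by
            rw [mul_inv_cancel₀ (poch_pos s).ne', mul_inv_cancel₀ (pow_ne_zero s (hεne i))]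
            ring
    rw [hkey]
  rw [Finset.sum_congr rfl hstep, Finset.sum_comm]
  refine Finset.sum_congr rfl fun i _ => ?_
  have hFi : F = (X - C (a i)) * ∏ j ∈ Finset.univ.erase i, (X - C (a j)) :=
    (Finset.mul_prod_erase Finset.univ _ (Finset.mem_univ i)).symm
  have hB := lemB (∏ j ∈ Finset.univ.erase i, (X - C (a j))) (a i) t (htne i) m hm
  rw [← hFi] at hB
  calc ∑ s ∈ Finset.Icc 1 m, (taylor t F).coeff (m - s) *
          (ξ i * (ε i * (t - a i)) ^ (-(1/2) : ℝ) * ((-1 : ℝ) ^ s * ((t - a i)⁻¹) ^ s))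
      = ξ i * (ε i * (t - a i)) ^ (-(1/2) : ℝ) *
          ∑ s ∈ Finset.Icc 1 m, (-1 : ℝ) ^ s * ((t - a i)⁻¹) ^ s * (taylor t F).coeff (m - s) := by
        rw [Finset.mul_sum]
        exact Finset.sum_congr rfl fun s _ => by ring
    _ = _ := by rw [hB]

/-- In the simple case, for every `1 ≤ k ≤ n`, the coefficient
`b̃_k(a) = ∑_{s=1}^{k} C(n-s, k-s) (-a)^{k-s} b_{n-s+1}(a)` satisfies
`b̃_k(a) = (-1)^k ∑ᵢ (ξᵢ / Δᵢ(a)^{1/2}) σ^i_{k-1}` on `I`. -/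
theorem stmt7 (n : ℕ) (a : Fin n → ℝ) (ha : Function.Injective a)
    (ε : Fin n → ℝ) (hε : ∀ i, ε i = 1 ∨ ε i = -1)
    (I : Set ℝ) (hIopen : IsOpen I) (hIconn : I.OrdConnected)
    (hΔ : ∀ i, ∀ t ∈ I, 0 < ε i * (t - a i))
    (ξ : Fin n → ℝ) :
    ∀ k : ℕ, 1 ≤ k → k ≤ n → ∀ t ∈ I,
      (∑ s ∈ Finset.Icc 1 k,
          (Nat.choose (n - s) (k - s) : ℝ) * (-t) ^ (k - s) * bk n a ε ξ (n - s + 1) t) =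
        (-1 : ℝ) ^ k *
          ∑ i, ξ i / (ε i * (t - a i)) ^ ((1/2) : ℝ) * sigmaI n a i ((k : ℤ) - 1) := by
  intro k hk1 hkn t ht
  have hti : ∀ i, 0 < ε i * (t - a i) := fun i => hΔ i t ht
  have hn1 : 1 ≤ n := le_trans hk1 hkn
  -- rewrite bk
  have h1 : ∀ s ∈ Finset.Icc 1 k,
      (Nat.choose (n - s) (k - s) : ℝ) * (-t) ^ (k - s) * bk n a ε ξ (n - s + 1) t
      = ∑ i, (ξ i * (ε i * (t - a i)) ^ (-(1/2) : ℝ)) *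
          ((Nat.choose (n - s) (k - s) : ℝ) * (-t) ^ (k - s) *
            (-(taylor t (∏ j ∈ Finset.univ.erase i, (X - C (a j)))).coeff (n - s))) := by
    intro s hs
    rw [bk_eq n a ε ξ hε t hti (n - s + 1) (by omega), Finset.mul_sum]
    refine Finset.sum_congr rfl fun i _ => ?_
    rw [Nat.add_sub_cancel]
    ring
  rw [Finset.sum_congr rfl h1, Finset.sum_comm, Finset.mul_sum]
  refine Finset.sum_congr rfl fun i _ => ?_
  set P : Polynomial ℝ := ∏ j ∈ Finset.univ.erase i, (X - C (a j)) with hPdef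
  have hdeg : P.natDegree < n := by
    have h : P.natDegree ≤ ∑ j ∈ Finset.univ.erase i, (X - C (a j)).natDegree :=
      Polynomial.natDegree_prod_le (Finset.univ.erase i) (fun j => X - C (a j))
    have h2 : ∑ j ∈ Finset.univ.erase i, (X - C (a j)).natDegree = n - 1 := by
      simp [Polynomial.natDegree_X_sub_C, Finset.card_erase_of_mem]
    omega
  have hsum : ∑ s ∈ Finset.Icc 1 k, (ξ i * (ε i * (t - a i)) ^ (-(1/2) : ℝ)) *
        ((Nat.choose (n - s) (k - s) : ℝ) * (-t) ^ (k - s) * (-(taylor t P).coeff (n - s)))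
      = (ξ i * (ε i * (t - a i)) ^ (-(1/2) : ℝ)) * (-(P.coeff (n - k))) := by
    rw [← lemC P n k hk1 hkn hdeg t, ← Finset.sum_neg_distrib, Finset.mul_sum]
    exact Finset.sum_congr rfl fun s _ => by ring
  rw [hsum]
  -- now the RHS side
  have hsig : sigmaI n a i ((k : ℤ) - 1) = (-1 : ℝ) ^ (k - 1) * P.coeff (n - k) := by
    rw [sigmaI, sig]
    rw [if_pos (by constructor <;> omega)]
    have e1 : ((k : ℤ) - 1) = ((k - 1 : ℕ) : ℤ) := by omega
    have e2 : n - 1 - ((k : ℤ) - 1).toNat = n - k := by omega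
    rw [e2, e1, zpow_natCast]
  rw [hsig]
  have hpow : (-1 : ℝ) ^ k = -(-1 : ℝ) ^ (k - 1) := by
    rw [show k = (k - 1) + 1 by omega, pow_succ]
    simp
  have hinv : (ε i * (t - a i)) ^ (-(1/2) : ℝ) = ((ε i * (t - a i)) ^ ((1/2) : ℝ))⁻¹ := by
    rw [← Real.rpow_neg (hti i).le]
  rw [div_eq_mul_inv (ξ i) ((ε i * (t - a i)) ^ ((1/2) : ℝ)), ← hinv, hpow]
  generalize (ε i * (t - a i)) ^ (-(1/2) : ℝ) = B
  have h11 : ((-1 : ℝ) ^ (k - 1)) * ((-1 : ℝ) ^ (k - 1)) = 1 := by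
    rw [← pow_add]
    exact Even.neg_one_pow ⟨k - 1, by ring⟩
  linear_combination (ξ i * B * P.coeff (n - k)) * h11
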